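/- Let (A[[t]], ν_t, d_t) with ν_t = ν0 + tν1 + t²ν2 and d_t = d + t d1 be a linear deformation of the modified λ-differential 3-Lie algebra (A, ν0 = [-,-,-], d). Then (ν1, d1) is a 2-cocycle with coefficients in the adjoint representation (A; ad, d); explicitly, for all a1,...,a5 ∈ A: ν1(a1,a2,[a3,a4,a5]) + [a1,a2,ν1(a3,a4,a5)] = ν1([a1,a2,a3],a4,a5) + [ν1(a1,a2,a3),a4,a5] + ν1(a3,[a1,a2,a4],a5) + [a3,ν1(a1,a2,a4),a5] + ν1(a3,a4,[a1,a2,a5]) + [a3,a4,ν1(a1,a2,a5)], and for all a1,a2,a3 ∈ A: d1([a1,a2,a3]) + d(ν1(a1,a2,a3)) = [d1(a1),a2,a3] + ν1(d(a1),a2,a3) + [a1,d1(a2),a3] + ν1(a1,d(a2),a3) + [a1,a2,d1(a3)] + ν1(a1,a2,d(a3)) + λν1(a1,a2,a3). -/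

import Mathlib

open Finset

section Prelude

variable (k : Type*) {A W M : Type*} [Field k] [CharZero k]
  [AddCommGroup A] [Module k A] [AddCommGroup W] [Module k W]
  [AddCommGroup M] [Module k M]

/-- A trilinear, totally skew-symmetric map `A × A × A → W`. -/
def IsTriSkew (f : A → A → A → W) : Prop :=
  (∀ (t : k) (a a' b c : A), f (t • a + a') b c = t • f a b c + f a' b c) ∧
  (∀ (t : k) (a b b' c : A), f a (t • b + b') c = t • f a b c + f a b' c) ∧
  (∀ (t : k) (a b c c' : A), f a b (t • c + c') = t • f a b c + f a b c') ∧
  (∀ a b c : A, f a b c = - f b a c) ∧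
  (∀ a b c : A, f a b c = - f a c b)

/-- `br` makes `A` a 3-Lie algebra: it is trilinear, totally skew-symmetric and
satisfies the Filippov identity. -/
def Is3LieBr (br : A → A → A → A) : Prop :=
  IsTriSkew k br ∧
  ∀ a1 a2 a3 a4 a5 : A, br a1 a2 (br a3 a4 a5) =
    br (br a1 a2 a3) a4 a5 + br a3 (br a1 a2 a4) a5 + br a3 a4 (br a1 a2 a5)

/-- `d` is a modified `lam`-differential operator on `(A, br)`. -/
def IsMDiffOn (br : A → A → A → A) (lam : k) (d : A → A) : Prop :=
  ∀ a b c : A, d (br a b c) =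
    br (d a) b c + br a (d b) c + br a b (d c) + lam • br a b c

/-- `ρ` is a representation of the 3-Lie algebra `(A, br)` on `M`. -/
def Is3LieRep (br : A → A → A → A) (ρ : A → A → M →ₗ[k] M) : Prop :=
  (∀ (t : k) (a a' b : A), ρ (t • a + a') b = t • ρ a b + ρ a' b) ∧
  (∀ (t : k) (a b b' : A), ρ a (t • b + b') = t • ρ a b + ρ a b') ∧
  (∀ a b : A, ρ a b = - ρ b a) ∧
  (∀ a1 a2 a3 a4 : A, ρ (br a1 a2 a3) a4 =
    ρ a2 a3 ∘ₗ ρ a1 a4 + ρ a3 a1 ∘ₗ ρ a2 a4 + ρ a1 a2 ∘ₗ ρ a3 a4) ∧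
  (∀ a1 a2 a3 a4 : A, ρ a1 a2 ∘ₗ ρ a3 a4 =
    ρ a3 a4 ∘ₗ ρ a1 a2 + ρ (br a1 a2 a3) a4 + ρ a3 (br a1 a2 a4))

/-- Compatibility of `dM` making `(M, ρ, dM)` a representation of the modified
`lam`-differential 3-Lie algebra `(A, br, d)`. -/
def IsMDiffRep (ρ : A → A → M →ₗ[k] M) (lam : k) (d : A → A) (dM : M → M) : Prop :=
  ∀ (a b : A) (v : M), dM (ρ a b v) =
    ρ (d a) b v + ρ a (d b) v + ρ a b (dM v) + lam • ρ a b v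

end Prelude

section DeformDefs

variable {A : Type*} [AddCommGroup A]

/-- The family of coefficients `ν₀ = br, ν₁, ν₂, νₛ = 0 (s > 2)` of `ν_t`. -/
def nuCoef (br nu1 nu2 : A → A → A → A) : ℕ → A → A → A → A := fun s =>
  if s = 0 then br else if s = 1 then nu1 else if s = 2 then nu2
    else fun _ _ _ => 0

/-- The family of coefficients `d₀ = d, d₁, dₗ = 0 (l > 1)` of `d_t`. -/
def dCoef (d d1 : A → A) : ℕ → A → A := fun l =>
  if l = 0 then d else if l = 1 then d1 else fun _ => 0

/-- The `t`-linear extension `ν_t = ν₀ + t ν₁ + t² ν₂` to `A[[t]]`, where an element of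
`A[[t]]` is encoded as its sequence of coefficients `ℕ → A`. -/
def nuT (br nu1 nu2 : A → A → A → A) :
    (ℕ → A) → (ℕ → A) → (ℕ → A) → (ℕ → A) := fun x y z n =>
  ∑ p ∈ Finset.Nat.antidiagonalTuple 4 n,
    nuCoef br nu1 nu2 (p 3) (x (p 0)) (y (p 1)) (z (p 2))

/-- The `t`-linear extension `d_t = d + t d₁` to `A[[t]]`. -/
def dT (d d1 : A → A) : (ℕ → A) → (ℕ → A) := fun x n =>
  ∑ p ∈ Finset.HasAntidiagonal.antidiagonal n, dCoef d d1 p.2 (x p.1)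

/-- The inclusion `A → A[[t]]` as constant power series. -/
def constT (a : A) : ℕ → A := fun n => if n = 0 then a else 0

end DeformDefs

section DeformProp

variable (k : Type*) {A : Type*} [Field k] [AddCommGroup A] [Module k A]

/-- `(ν_t, d_t)` endows `A[[t]]` with a modified `λ`-differential 3-Lie algebra
structure: `ν_t` satisfies the Filippov identity and `d_t` the modified
`λ`-differential identity. -/
def IsLinearDeformation (br nu1 nu2 : A → A → A → A) (lam : k) (d d1 : A → A) :
    Prop :=
  (∀ x y z w u : ℕ → A,
    nuT br nu1 nu2 x y (nuT br nu1 nu2 z w u) =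
      nuT br nu1 nu2 (nuT br nu1 nu2 x y z) w u +
        nuT br nu1 nu2 z (nuT br nu1 nu2 x y w) u +
          nuT br nu1 nu2 z w (nuT br nu1 nu2 x y u)) ∧
  (∀ x y z : ℕ → A,
    dT d d1 (nuT br nu1 nu2 x y z) =
      nuT br nu1 nu2 (dT d d1 x) y z + nuT br nu1 nu2 x (dT d d1 y) z +
        nuT br nu1 nu2 x y (dT d d1 z) + lam • nuT br nu1 nu2 x y z)

end DeformProp


section MyAux

variable {k : Type*} {A : Type*} [Field k] [CharZero k] [AddCommGroup A] [Module k A]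

lemma mySkewZero₁ {f : A → A → A → A} (hf : IsTriSkew k f) (b c : A) :
    f 0 b c = 0 := by
  obtain ⟨h1, -, -, -, -⟩ := hf
  have h := h1 1 0 0 b c
  simp only [one_smul, add_zero, smul_zero] at h
  exact left_eq_add.mp h

lemma mySkewZero₂ {f : A → A → A → A} (hf : IsTriSkew k f) (a c : A) :
    f a 0 c = 0 := by
  rw [hf.2.2.2.1 a 0 c, mySkewZero₁ hf, neg_zero]

lemma mySkewZero₃ {f : A → A → A → A} (hf : IsTriSkew k f) (a b : A) :
    f a b 0 = 0 := by
  rw [hf.2.2.2.2 a b 0, mySkewZero₂ hf, neg_zero]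

variable {br nu1 nu2 : A → A → A → A}

lemma myCoefZ₁ (hb : IsTriSkew k br) (hn1 : IsTriSkew k nu1) (hn2 : IsTriSkew k nu2)
    (s : ℕ) (b c : A) : nuCoef br nu1 nu2 s 0 b c = 0 := by
  unfold nuCoef
  split_ifs
  · exact mySkewZero₁ hb b c
  · exact mySkewZero₁ hn1 b c
  · exact mySkewZero₁ hn2 b c
  · rfl

lemma myCoefZ₂ (hb : IsTriSkew k br) (hn1 : IsTriSkew k nu1) (hn2 : IsTriSkew k nu2)
    (s : ℕ) (a c : A) : nuCoef br nu1 nu2 s a 0 c = 0 := by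
  unfold nuCoef
  split_ifs
  · exact mySkewZero₂ hb a c
  · exact mySkewZero₂ hn1 a c
  · exact mySkewZero₂ hn2 a c
  · rfl

lemma myCoefZ₃ (hb : IsTriSkew k br) (hn1 : IsTriSkew k nu1) (hn2 : IsTriSkew k nu2)
    (s : ℕ) (a b : A) : nuCoef br nu1 nu2 s a b 0 = 0 := by
  unfold nuCoef
  split_ifs
  · exact mySkewZero₃ hb a b
  · exact mySkewZero₃ hn1 a b
  · exact mySkewZero₃ hn2 a b
  · rfl

lemma myAdt1 : Finset.Nat.antidiagonalTuple 4 1 =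
    ({![1,0,0,0], ![0,1,0,0], ![0,0,1,0], ![0,0,0,1]} : Finset (Fin 4 → ℕ)) := by
  decide

lemma myAdt0 : Finset.Nat.antidiagonalTuple 4 0 =
    ({![0,0,0,0]} : Finset (Fin 4 → ℕ)) := by decide

lemma myNuT0 (x y z : ℕ → A) :
    nuT br nu1 nu2 x y z 0 = br (x 0) (y 0) (z 0) := by
  unfold nuT
  rw [myAdt0, Finset.sum_singleton]
  rfl

lemma myNuT1₁₂ (hb : IsTriSkew k br) (hn1 : IsTriSkew k nu1) (hn2 : IsTriSkew k nu2)
    (a b : A) (z : ℕ → A) :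
    nuT br nu1 nu2 (constT a) (constT b) z 1 =
      br a b (z 1) + nu1 a b (z 0) := by
  unfold nuT
  rw [myAdt1, Finset.sum_insert (by decide), Finset.sum_insert (by decide),
    Finset.sum_insert (by decide), Finset.sum_singleton]
  show nuCoef br nu1 nu2 0 (constT a 1) (constT b 0) (z 0) +
      (nuCoef br nu1 nu2 0 (constT a 0) (constT b 1) (z 0) +
        (nuCoef br nu1 nu2 0 (constT a 0) (constT b 0) (z 1) +
          nuCoef br nu1 nu2 1 (constT a 0) (constT b 0) (z 0))) = _
  show nuCoef br nu1 nu2 0 0 b (z 0) + (nuCoef br nu1 nu2 0 a 0 (z 0) +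
      (br a b (z 1) + nu1 a b (z 0))) = _
  rw [myCoefZ₁ hb hn1 hn2, myCoefZ₂ hb hn1 hn2, zero_add, zero_add]

lemma myNuT1₂₃ (hb : IsTriSkew k br) (hn1 : IsTriSkew k nu1) (hn2 : IsTriSkew k nu2)
    (b c : A) (z : ℕ → A) :
    nuT br nu1 nu2 z (constT b) (constT c) 1 =
      br (z 1) b c + nu1 (z 0) b c := by
  unfold nuT
  rw [myAdt1, Finset.sum_insert (by decide), Finset.sum_insert (by decide),
    Finset.sum_insert (by decide), Finset.sum_singleton]
  show nuCoef br nu1 nu2 0 (z 1) (constT b 0) (constT c 0) +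
      (nuCoef br nu1 nu2 0 (z 0) (constT b 1) (constT c 0) +
        (nuCoef br nu1 nu2 0 (z 0) (constT b 0) (constT c 1) +
          nuCoef br nu1 nu2 1 (z 0) (constT b 0) (constT c 0))) = _
  show br (z 1) b c + (nuCoef br nu1 nu2 0 (z 0) 0 c +
      (nuCoef br nu1 nu2 0 (z 0) b 0 + nu1 (z 0) b c)) = _
  rw [myCoefZ₂ hb hn1 hn2, myCoefZ₃ hb hn1 hn2, zero_add, zero_add]

lemma myNuT1₁₃ (hb : IsTriSkew k br) (hn1 : IsTriSkew k nu1) (hn2 : IsTriSkew k nu2)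
    (a c : A) (z : ℕ → A) :
    nuT br nu1 nu2 (constT a) z (constT c) 1 =
      br a (z 1) c + nu1 a (z 0) c := by
  unfold nuT
  rw [myAdt1, Finset.sum_insert (by decide), Finset.sum_insert (by decide),
    Finset.sum_insert (by decide), Finset.sum_singleton]
  show nuCoef br nu1 nu2 0 (constT a 1) (z 0) (constT c 0) +
      (nuCoef br nu1 nu2 0 (constT a 0) (z 1) (constT c 0) +
        (nuCoef br nu1 nu2 0 (constT a 0) (z 0) (constT c 1) +
          nuCoef br nu1 nu2 1 (constT a 0) (z 0) (constT c 0))) = _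
  show nuCoef br nu1 nu2 0 0 (z 0) c + (br a (z 1) c +
      (nuCoef br nu1 nu2 0 a (z 0) 0 + nu1 a (z 0) c)) = _
  rw [myCoefZ₁ hb hn1 hn2, myCoefZ₃ hb hn1 hn2]
  abel

lemma myNuT1ccc (hb : IsTriSkew k br) (hn1 : IsTriSkew k nu1) (hn2 : IsTriSkew k nu2)
    (a b c : A) :
    nuT br nu1 nu2 (constT a) (constT b) (constT c) 1 = nu1 a b c := by
  rw [myNuT1₁₂ hb hn1 hn2]
  show br a b 0 + nu1 a b (constT c 0) = _
  rw [mySkewZero₃ hb, zero_add]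
  rfl

lemma myDT0 (d d1 : A → A) (x : ℕ → A) : dT d d1 x 0 = d (x 0) := by
  unfold dT
  rw [show (Finset.HasAntidiagonal.antidiagonal 0 : Finset (ℕ × ℕ)) = {(0, 0)} from by decide,
    Finset.sum_singleton]
  rfl

lemma myDT1 (d d1 : A → A) (x : ℕ → A) : dT d d1 x 1 = d1 (x 0) + d (x 1) := by
  unfold dT
  rw [show (Finset.HasAntidiagonal.antidiagonal 1 : Finset (ℕ × ℕ)) = {(0, 1), (1, 0)} from by
      decide,
    Finset.sum_insert (by decide), Finset.sum_singleton]
  rfl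

end MyAux

/-- the infinitesimal `(ν₁, d₁)` of a linear deformation
`(A[[t]], ν_t, d_t)` of `(A, br, d)` is a 2-cocycle with coefficients in the adjoint
representation. -/
theorem stmt10 {k A : Type*} [Field k] [CharZero k] [AddCommGroup A] [Module k A]
    (br : A → A → A → A) (lam : k) (d : A →ₗ[k] A)
    (h3 : Is3LieBr k br) (hd : IsMDiffOn k br lam ⇑d)
    (nu1 nu2 : A → A → A → A) (hnu1 : IsTriSkew k nu1) (hnu2 : IsTriSkew k nu2)
    (d1 : A →ₗ[k] A)
    (hdef : IsLinearDeformation k br nu1 nu2 lam ⇑d ⇑d1) :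
    (∀ a1 a2 a3 a4 a5 : A,
      nu1 a1 a2 (br a3 a4 a5) + br a1 a2 (nu1 a3 a4 a5) =
        nu1 (br a1 a2 a3) a4 a5 + br (nu1 a1 a2 a3) a4 a5 +
          nu1 a3 (br a1 a2 a4) a5 + br a3 (nu1 a1 a2 a4) a5 +
            nu1 a3 a4 (br a1 a2 a5) + br a3 a4 (nu1 a1 a2 a5)) ∧
    (∀ a1 a2 a3 : A,
      d1 (br a1 a2 a3) + d (nu1 a1 a2 a3) =
        br (d1 a1) a2 a3 + nu1 (d a1) a2 a3 + br a1 (d1 a2) a3 +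
          nu1 a1 (d a2) a3 + br a1 a2 (d1 a3) + nu1 a1 a2 (d a3) +
            lam • nu1 a1 a2 a3) := by
  obtain ⟨hb, hfil⟩ := h3
  constructor
  · intro a1 a2 a3 a4 a5
    have H := congrFun (hdef.1 (constT a1) (constT a2) (constT a3) (constT a4)
      (constT a5)) 1
    simp only [Pi.add_apply] at H
    simp only [myNuT1₁₂ hb hnu1 hnu2, myNuT1₂₃ hb hnu1 hnu2,
      myNuT1₁₃ hb hnu1 hnu2, myNuT0,
      show ∀ a : A, constT a 1 = 0 from fun _ => rfl,
      show ∀ a : A, constT a 0 = a from fun _ => rfl,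
      mySkewZero₁ hb, mySkewZero₂ hb, mySkewZero₃ hb,
      mySkewZero₁ hnu1, mySkewZero₂ hnu1, mySkewZero₃ hnu1,
      zero_add, add_zero] at H
    abel_nf at H ⊢
    exact H
  · intro a1 a2 a3
    have H := congrFun (hdef.2 (constT a1) (constT a2) (constT a3)) 1
    simp only [Pi.add_apply, Pi.smul_apply] at H
    simp only [myDT0, myDT1, myNuT1₁₂ hb hnu1 hnu2, myNuT1₂₃ hb hnu1 hnu2,
      myNuT1₁₃ hb hnu1 hnu2, myNuT0,
      show ∀ a : A, constT a 1 = 0 from fun _ => rfl,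
      show ∀ a : A, constT a 0 = a from fun _ => rfl,
      map_zero, mySkewZero₁ hb, mySkewZero₂ hb, mySkewZero₃ hb,
      mySkewZero₁ hnu1, mySkewZero₂ hnu1, mySkewZero₃ hnu1,
      zero_add, add_zero] at H
    abel_nf at H ⊢
    exact H
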